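/- Let Ω ⊂ ℝ^N (N ≥ 2) be a bounded open domain with C² boundary and α ∈ (0,1). If w is a continuous function on the closure of Ω which is a viscosity solution of (-Δ)^α_Ω w = 0 in Ω with w = 0 on ∂Ω, then w ≡ 0 in Ω. -/

import Mathlib

open MeasureTheory Metric Set Filter Topology

noncomputable section

variable {N : ℕ}

/-- The distance from `x` to the complement of `Ω`, denoted `ρ(x)` in the paper. -/
def bdist (Ω : Set (EuclideanSpace ℝ (Fin N))) (x : EuclideanSpace ℝ (Fin N)) : ℝ :=
  Metric.infDist x Ωᶜ

/-- A set `Ω ⊆ ℝ^N` has `C²` boundary: near each boundary point, `Ω` is the sublevel set of a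
`C²` function with nonvanishing differential. -/
def HasC2Boundary (Ω : Set (EuclideanSpace ℝ (Fin N))) : Prop :=
  ∀ x ∈ frontier Ω, ∃ (U : Set (EuclideanSpace ℝ (Fin N))) (ψ : EuclideanSpace ℝ (Fin N) → ℝ),
    IsOpen U ∧ x ∈ U ∧ ContDiff ℝ 2 ψ ∧ (∀ y ∈ U, fderiv ℝ ψ y ≠ 0) ∧
    Ω ∩ U = {y ∈ U | ψ y < 0}

/-- `L` is the principal value of the regional fractional Laplacian `(-Δ)^α_Ω u (x)`. -/
def IsRegionalFracLap (Ω : Set (EuclideanSpace ℝ (Fin N))) (α : ℝ)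
    (u : EuclideanSpace ℝ (Fin N) → ℝ) (x : EuclideanSpace ℝ (Fin N)) (L : ℝ) : Prop :=
  Tendsto (fun ε : ℝ => ∫ y in Ω \ Metric.ball x ε, (u x - u y) / ‖x - y‖ ^ ((N : ℝ) + 2 * α))
    (𝓝[>] (0 : ℝ)) (𝓝 L)

/-- `L` is the principal value of the (full) fractional Laplacian `(-Δ)^α u (x)`. -/
def IsFracLap (α : ℝ) (u : EuclideanSpace ℝ (Fin N) → ℝ)
    (x : EuclideanSpace ℝ (Fin N)) (L : ℝ) : Prop :=
  Tendsto (fun ε : ℝ => ∫ y in (Metric.ball x ε)ᶜ, (u x - u y) / ‖x - y‖ ^ ((N : ℝ) + 2 * α))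
    (𝓝[>] (0 : ℝ)) (𝓝 L)

open Classical in
/-- The test-function modification `ũ`, equal to `φ` on `V` and to `u` elsewhere. -/
def patch (V : Set (EuclideanSpace ℝ (Fin N))) (φ u : EuclideanSpace ℝ (Fin N) → ℝ) :
    EuclideanSpace ℝ (Fin N) → ℝ :=
  fun y => if y ∈ V then φ y else u y

/-- `u` satisfies `(-Δ)^α_Ω u + f(u) ≥ g` in `Ω` in the viscosity sense. -/
def ViscSuper (Ω : Set (EuclideanSpace ℝ (Fin N))) (α : ℝ) (f : ℝ → ℝ)
    (g u : EuclideanSpace ℝ (Fin N) → ℝ) : Prop :=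
  ∀ x₀ ∈ Ω, ∀ V : Set (EuclideanSpace ℝ (Fin N)), IsOpen V → x₀ ∈ V → closure V ⊆ Ω →
    ∀ φ : EuclideanSpace ℝ (Fin N) → ℝ, ContDiffOn ℝ 2 φ (closure V) → φ x₀ = u x₀ →
      (∀ y ∈ V, u x₀ - φ x₀ ≤ u y - φ y) →
      ∃ L : ℝ, IsRegionalFracLap Ω α (patch V φ u) x₀ L ∧ g x₀ ≤ L + f (u x₀)

/-- `u` satisfies `(-Δ)^α_Ω u + f(u) ≤ g` in `Ω` in the viscosity sense. -/
def ViscSub (Ω : Set (EuclideanSpace ℝ (Fin N))) (α : ℝ) (f : ℝ → ℝ)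
    (g u : EuclideanSpace ℝ (Fin N) → ℝ) : Prop :=
  ∀ x₀ ∈ Ω, ∀ V : Set (EuclideanSpace ℝ (Fin N)), IsOpen V → x₀ ∈ V → closure V ⊆ Ω →
    ∀ φ : EuclideanSpace ℝ (Fin N) → ℝ, ContDiffOn ℝ 2 φ (closure V) → φ x₀ = u x₀ →
      (∀ y ∈ V, u y - φ y ≤ u x₀ - φ x₀) →
      ∃ L : ℝ, IsRegionalFracLap Ω α (patch V φ u) x₀ L ∧ L + f (u x₀) ≤ g x₀

/-- `u` satisfies `(-Δ)^α u + f(u) ≥ g` in `Ω` in the viscosity sense (full fractional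
Laplacian). -/
def ViscSuperFrac (Ω : Set (EuclideanSpace ℝ (Fin N))) (α : ℝ) (f : ℝ → ℝ)
    (g u : EuclideanSpace ℝ (Fin N) → ℝ) : Prop :=
  ∀ x₀ ∈ Ω, ∀ V : Set (EuclideanSpace ℝ (Fin N)), IsOpen V → x₀ ∈ V → closure V ⊆ Ω →
    ∀ φ : EuclideanSpace ℝ (Fin N) → ℝ, ContDiffOn ℝ 2 φ (closure V) → φ x₀ = u x₀ →
      (∀ y ∈ V, u x₀ - φ x₀ ≤ u y - φ y) →
      ∃ L : ℝ, IsFracLap α (patch V φ u) x₀ L ∧ g x₀ ≤ L + f (u x₀)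

/-- `u` satisfies `(-Δ)^α u + f(u) ≤ g` in `Ω` in the viscosity sense (full fractional
Laplacian). -/
def ViscSubFrac (Ω : Set (EuclideanSpace ℝ (Fin N))) (α : ℝ) (f : ℝ → ℝ)
    (g u : EuclideanSpace ℝ (Fin N) → ℝ) : Prop :=
  ∀ x₀ ∈ Ω, ∀ V : Set (EuclideanSpace ℝ (Fin N)), IsOpen V → x₀ ∈ V → closure V ⊆ Ω →
    ∀ φ : EuclideanSpace ℝ (Fin N) → ℝ, ContDiffOn ℝ 2 φ (closure V) → φ x₀ = u x₀ →
      (∀ y ∈ V, u y - φ y ≤ u x₀ - φ x₀) →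
      ∃ L : ℝ, IsFracLap α (patch V φ u) x₀ L ∧ L + f (u x₀) ≤ g x₀

/-- `u(x) → +∞` as `x → ∂Ω` from inside `Ω`. -/
def BlowsUp (Ω : Set (EuclideanSpace ℝ (Fin N))) (u : EuclideanSpace ℝ (Fin N) → ℝ) : Prop :=
  ∀ z ∈ frontier Ω, Tendsto u (𝓝[Ω] z) atTop

/-- A boundary blow-up viscosity solution of `(-Δ)^α_Ω u + f(u) = 0` in `Ω`,
`u = +∞` on `∂Ω`. -/
def IsBBSolution (Ω : Set (EuclideanSpace ℝ (Fin N))) (α : ℝ) (f : ℝ → ℝ)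
    (u : EuclideanSpace ℝ (Fin N) → ℝ) : Prop :=
  ContinuousOn u Ω ∧ IntegrableOn u Ω volume ∧
  ViscSuper Ω α f (fun _ => 0) u ∧ ViscSub Ω α f (fun _ => 0) u ∧ BlowsUp Ω u

/-- A viscosity solution of `(-Δ)^α_Ω u + f(u) = g` in `Ω`, `u = c` on `∂Ω` (the constant
boundary value being attained continuously). -/
def IsDirichletSol (Ω : Set (EuclideanSpace ℝ (Fin N))) (α : ℝ) (f : ℝ → ℝ)
    (g : EuclideanSpace ℝ (Fin N) → ℝ) (c : ℝ) (u : EuclideanSpace ℝ (Fin N) → ℝ) : Prop :=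
  ContinuousOn u Ω ∧ IntegrableOn u Ω volume ∧
  ViscSuper Ω α f g u ∧ ViscSub Ω α f g u ∧
  ∀ z ∈ frontier Ω, Tendsto u (𝓝[Ω] z) (𝓝 c)

/-- The `C^t = C^{t₀, t - t₀}` Hölder norm of `w` on `s` is at most `M` (for `t` a positive
noninteger with integer part `t₀ = ⌊t⌋`). -/
def CNormLE (t : ℝ) (w : EuclideanSpace ℝ (Fin N) → ℝ)
    (s : Set (EuclideanSpace ℝ (Fin N))) (M : ℝ) : Prop :=
  ContDiffOn ℝ (⌊t⌋₊ : ℕ) w s ∧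
  (∀ k : ℕ, k ≤ ⌊t⌋₊ → ∀ x ∈ s, ‖iteratedFDerivWithin ℝ k w s x‖ ≤ M) ∧
  ∀ x ∈ s, ∀ y ∈ s,
    ‖iteratedFDerivWithin ℝ ⌊t⌋₊ w s x - iteratedFDerivWithin ℝ ⌊t⌋₊ w s y‖ ≤
      M * ‖x - y‖ ^ (t - (⌊t⌋₊ : ℝ))

/-- `w` is locally `C^t` in the open set `Ω`. -/
def LocallyCNorm (t : ℝ) (w : EuclideanSpace ℝ (Fin N) → ℝ)
    (Ω : Set (EuclideanSpace ℝ (Fin N))) : Prop :=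
  ∀ x ∈ Ω, ∃ r > 0, Metric.ball x r ⊆ Ω ∧ ∃ M : ℝ, CNormLE t w (Metric.ball x r) M

/-- `t` is not an integer. -/
def NotNatural (t : ℝ) : Prop := ¬ ∃ n : ℕ, t = n
lemma viscSub_neg {Ω : Set (EuclideanSpace ℝ (Fin N))} {α : ℝ}
    {w : EuclideanSpace ℝ (Fin N) → ℝ}
    (hsuper : ViscSuper Ω α (fun _ => 0) (fun _ => 0) w) :
    ViscSub Ω α (fun _ => 0) (fun _ => 0) (fun y => -w y) := by
  intro x₀ hx₀ V hVo hx₀V hclV φ hφ hφx₀ hmax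
  obtain ⟨L, hL, hge⟩ := hsuper x₀ hx₀ V hVo hx₀V hclV (fun y => -φ y) hφ.neg
    (by simp only at hφx₀ ⊢; linarith)
    (fun y hy => by have := hmax y hy; simp only at this ⊢; linarith)
  refine ⟨-L, ?_, by simp only at hge ⊢; linarith⟩
  have hpe : ∀ y, patch V φ (fun y => -w y) y = - patch V (fun y => -φ y) w y := by
    intro y; by_cases h : y ∈ V <;> simp [patch, h]
  have h2 := hL.neg
  apply h2.congr
  intro ε
  rw [← integral_neg]
  refine integral_congr_ae (Eventually.of_forall fun y => ?_)
  simp only [hpe, ← neg_div]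
  ring_nf

set_option maxHeartbeats 2000000 in
lemma aux_nonpos (hN : 2 ≤ N) {Ω : Set (EuclideanSpace ℝ (Fin N))}
    (hΩo : IsOpen Ω) (hΩb : Bornology.IsBounded Ω) (hΩne : Ω.Nonempty)
    {α : ℝ} (hα1 : 0 < α)
    {w : EuclideanSpace ℝ (Fin N) → ℝ}
    (hwcont : ContinuousOn w (closure Ω)) (hwint : IntegrableOn w Ω volume)
    (hsub : ViscSub Ω α (fun _ => 0) (fun _ => 0) w)
    (hbdry : ∀ z ∈ frontier Ω, w z = 0) :
    ∀ x ∈ closure Ω, w x ≤ 0 := by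
  classical
  by_contra hcon
  push_neg at hcon
  obtain ⟨xp, hxpcl, hxp⟩ := hcon
  have hp : (0:ℝ) < (N:ℝ) + 2*α := by positivity
  set p : ℝ := (N:ℝ) + 2*α with hpdef
  -- compactness and max point
  have hcpt : IsCompact (closure Ω) := isCompact_of_isClosed_isBounded isClosed_closure hΩb.closure
  obtain ⟨x₀, hx₀cl, hmax⟩ := hcpt.exists_isMaxOn (hΩne.mono subset_closure) hwcont
  have hmax' : ∀ y ∈ closure Ω, w y ≤ w x₀ := hmax
  set M : ℝ := w x₀ with hMdef
  have hM : 0 < M := lt_of_lt_of_le hxp (hmax' xp hxpcl)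
  have hfrsub : frontier Ω = closure Ω \ Ω := hΩo.frontier_eq
  have hx₀Ω : x₀ ∈ Ω := by
    by_contra h
    have : x₀ ∈ frontier Ω := hfrsub ▸ ⟨hx₀cl, h⟩
    have := hbdry x₀ this
    simp only [← hMdef] at this
    linarith
  -- nontrivial space & nonempty frontier
  have hnt : Nontrivial (EuclideanSpace ℝ (Fin N)) := by
    refine ⟨0, EuclideanSpace.single ⟨0, by omega⟩ 1, fun h => ?_⟩
    have := congrArg (fun f => f ⟨0, by omega⟩) h
    simp [EuclideanSpace.single_apply] at this
  have hfr : (frontier Ω).Nonempty := by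
    rcases eq_empty_or_nonempty (frontier Ω) with h | h
    · exfalso
      rcases frontier_eq_empty_iff.mp h with h1 | h1
      · exact hΩne.ne_empty h1
      · exact NormedSpace.unbounded_univ ℝ (EuclideanSpace ℝ (Fin N)) (h1 ▸ hΩb)
    · exact h
  obtain ⟨z, hzfr⟩ := hfr
  have hzcl : z ∈ closure Ω := frontier_subset_closure hzfr
  have hznΩ : z ∉ Ω := (hfrsub ▸ hzfr).2
  have hwz : w z = 0 := hbdry z hzfr
  -- continuity at z: find δ with w < M/2 near z
  have hct : Tendsto w (𝓝[closure Ω] z) (𝓝 0) := hwz ▸ hwcont z hzcl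
  have hev : ∀ᶠ y in 𝓝[closure Ω] z, w y < M/2 := hct.eventually_lt_const (by linarith)
  obtain ⟨δ, hδ, hδw₀⟩ := Metric.mem_nhdsWithin_iff.mp hev
  have hδw : ∀ y ∈ closure Ω, dist y z < δ → w y < M/2 :=
    fun y hy hd => hδw₀ ⟨mem_ball.mpr hd, hy⟩
  -- geometry: d, r, δ'
  have hd : 0 < dist z x₀ := dist_pos.mpr (fun h => hznΩ (h ▸ hx₀Ω))
  obtain ⟨r₀, hr₀, hr₀sub⟩ := Metric.isOpen_iff.mp hΩo x₀ hx₀Ω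
  set r : ℝ := min (r₀/2) (dist z x₀ / 4) with hrdef
  have hr : 0 < r := lt_min (by linarith) (by linarith)
  set V : Set (EuclideanSpace ℝ (Fin N)) := ball x₀ r with hVdef
  have hclV : closure V ⊆ Ω := by
    refine subset_trans closure_ball_subset_closedBall (subset_trans ?_ hr₀sub)
    exact closedBall_subset_ball (lt_of_le_of_lt (min_le_left _ _) (by linarith))
  set δ' : ℝ := min δ (dist z x₀ / 2) with hδ'def
  have hδ' : 0 < δ' := lt_min hδ (by linarith)
  -- disjointness of ball z δ' and closedBall x₀ r
  have hdisj : ∀ y ∈ ball z δ', y ∉ closedBall x₀ r := by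
    intro y hy hy'
    have h1 : dist y z < dist z x₀ / 2 := lt_of_lt_of_le (mem_ball.mp hy) (min_le_right _ _)
    have h2 : dist y x₀ ≤ dist z x₀ / 4 := le_trans (mem_closedBall.mp hy') (min_le_right _ _)
    have := dist_triangle z y x₀
    rw [dist_comm z y] at this
    linarith
  set S : Set (EuclideanSpace ℝ (Fin N)) := Ω ∩ ball z δ' with hSdef
  have hSsub : S ⊆ Ω \ ball x₀ r := fun y hy =>
    ⟨hy.1, fun h => hdisj y hy.2 (ball_subset_closedBall h)⟩
  -- apply viscosity subsolution with constant test function M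
  obtain ⟨L, hL, hLle⟩ := hsub x₀ hx₀Ω V isOpen_ball (mem_ball_self hr) hclV
    (fun _ => M) contDiffOn_const rfl
    (fun y hy => by
      have := hmax' y (subset_closure (hclV (subset_closure hy)))
      linarith)
  have hLle' : L ≤ 0 := by simpa using hLle
  set u : EuclideanSpace ℝ (Fin N) → ℝ := patch V (fun _ => M) w with hudef
  have hux₀ : u x₀ = M := by simp [hudef, patch, show x₀ ∈ V from mem_ball_self hr]
  have huV : ∀ y ∈ V, u y = M := fun y hy => by simp [hudef, patch, hy]
  have hunV : ∀ y, y ∉ V → u y = w y := fun y hy => by simp [hudef, patch, hy]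
  have hule : ∀ y ∈ Ω, u y ≤ M := by
    intro y hy
    by_cases h : y ∈ V
    · exact (huV y h).le
    · rw [hunV y h]; exact hmax' y (subset_closure hy)
  -- integrability of u on Ω
  have hΩmeas : MeasurableSet Ω := hΩo.measurableSet
  have hΩvol : volume Ω < ⊤ := hΩb.measure_lt_top
  have huΩ : IntegrableOn u Ω volume := by
    have h1 : IntegrableOn u (Ω ∩ V) volume := by
      refine (integrableOn_const (LT.lt.ne ?_)).congr_fun
        (fun y hy => (huV y hy.2).symm) (hΩmeas.inter measurableSet_ball)
      exact lt_of_le_of_lt (measure_mono inter_subset_left) hΩvol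
    have h2 : IntegrableOn u (Ω \ V) volume := by
      refine (hwint.mono_set diff_subset).congr_fun
        (fun y hy => (hunV y hy.2).symm) (hΩmeas.diff measurableSet_ball)
    have := h1.union h2
    rwa [Set.inter_union_diff] at this
  -- the integrand
  set f : EuclideanSpace ℝ (Fin N) → ℝ := fun y => (u x₀ - u y) / ‖x₀ - y‖ ^ p with hfdef
  have hker_cont : Continuous (fun y : EuclideanSpace ℝ (Fin N) => ‖x₀ - y‖ ^ p) := by
    apply Continuous.rpow_const ((continuous_const.sub continuous_id).norm)
    intro y; right; exact hp.le
  have hf_nonneg : ∀ y ∈ Ω, 0 ≤ f y := by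
    intro y hy
    refine div_nonneg ?_ (Real.rpow_nonneg (norm_nonneg _) _)
    rw [hux₀]; linarith [hule y hy]
  -- integrability of f on Ω \ ball x₀ ε
  have hInt : ∀ ε : ℝ, 0 < ε → IntegrableOn f (Ω \ ball x₀ ε) volume := by
    intro ε hε
    have hset : MeasurableSet (Ω \ ball x₀ ε) := hΩmeas.diff measurableSet_ball
    have hu' : IntegrableOn u (Ω \ ball x₀ ε) volume := huΩ.mono_set diff_subset
    have hvol' : volume (Ω \ ball x₀ ε) < ⊤ := lt_of_le_of_lt (measure_mono diff_subset) hΩvol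
    have hg : IntegrableOn (fun y => |M| * (ε ^ p)⁻¹ + |u y| * (ε ^ p)⁻¹) (Ω \ ball x₀ ε) volume :=
      (integrableOn_const hvol'.ne).add (hu'.abs.mul_const _)
    refine Integrable.mono' hg ?_ ?_
    · have h1 : AEStronglyMeasurable (fun y => u x₀ - u y)
          (volume.restrict (Ω \ ball x₀ ε)) :=
        aestronglyMeasurable_const.sub hu'.aestronglyMeasurable
      have h2 : Measurable (fun y : EuclideanSpace ℝ (Fin N) => (‖x₀ - y‖ ^ p)⁻¹) :=
        hker_cont.measurable.inv
      have h3 := h1.mul h2.aestronglyMeasurable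
      simp only [hfdef, div_eq_mul_inv]
      exact h3
    · filter_upwards [ae_restrict_mem hset] with y hy
      have hdist : ε ≤ ‖x₀ - y‖ := by
        have := hy.2
        rw [mem_ball, dist_comm] at this
        push_neg at this
        rwa [← dist_eq_norm]
      have hkpos : (0:ℝ) < ε ^ p := Real.rpow_pos_of_pos hε _
      have hkle : ε ^ p ≤ ‖x₀ - y‖ ^ p := Real.rpow_le_rpow hε.le hdist hp.le
      have : ‖f y‖ = |u x₀ - u y| / ‖x₀ - y‖ ^ p := by
        rw [hfdef]; simp only [Real.norm_eq_abs, abs_div,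
          abs_of_nonneg (Real.rpow_nonneg (norm_nonneg _) p)]
      rw [this, hux₀, div_eq_mul_inv]
      have h1 : |M - u y| ≤ |M| + |u y| := abs_sub _ _
      have h2 : (‖x₀ - y‖ ^ p)⁻¹ ≤ (ε ^ p)⁻¹ := by
        apply inv_anti₀ hkpos hkle
      have h3 : (0:ℝ) ≤ (‖x₀ - y‖ ^ p)⁻¹ := by positivity
      calc |M - u y| * (‖x₀ - y‖ ^ p)⁻¹ ≤ (|M| + |u y|) * (ε ^ p)⁻¹ := by
            apply mul_le_mul h1 h2 h3 (by positivity)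
        _ = |M| * (ε ^ p)⁻¹ + |u y| * (ε ^ p)⁻¹ := by ring
  -- monotonicity and limit comparison
  have hmono : ∀ ε ∈ Ioo (0:ℝ) r, (∫ y in Ω \ ball x₀ r, f y) ≤ ∫ y in Ω \ ball x₀ ε, f y := by
    intro ε hε
    refine setIntegral_mono_set (hInt ε hε.1) ?_ ?_
    · filter_upwards [ae_restrict_mem (hΩmeas.diff measurableSet_ball)] with y hy
      exact hf_nonneg y hy.1
    · exact HasSubset.Subset.eventuallyLE
        (diff_subset_diff_right (ball_subset_ball hε.2.le))
  have hLge : (∫ y in Ω \ ball x₀ r, f y) ≤ L := by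
    refine ge_of_tendsto hL ?_
    filter_upwards [Ioo_mem_nhdsGT_of_mem ⟨le_refl 0, hr⟩] with ε hε
    exact hmono ε hε
  -- lower bound over S
  obtain ⟨C, hC⟩ := Metric.isBounded_iff.mp hΩb.closure
  set R : ℝ := max C 1 with hRdef
  have hR : 0 < R := lt_of_lt_of_le one_pos (le_max_right _ _)
  set c : ℝ := (M/2) / R ^ p with hcdef
  have hcpos : 0 < c := div_pos (by linarith) (Real.rpow_pos_of_pos hR _)
  have hSne : S.Nonempty := by
    obtain ⟨y, hy1, hy2⟩ := mem_closure_iff.mp hzcl (ball z δ') isOpen_ball (mem_ball_self hδ')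
    exact ⟨y, hy2, hy1⟩
  have hSopen : IsOpen S := hΩo.inter isOpen_ball
  have hSvolpos : 0 < volume S := hSopen.measure_pos volume hSne
  have hSvolfin : volume S < ⊤ := lt_of_le_of_lt (measure_mono inter_subset_left) hΩvol
  have hflow : ∀ y ∈ S, c ≤ f y := by
    intro y hy
    have hynV : y ∉ V := fun h => hdisj y hy.2 (ball_subset_closedBall h)
    have hyw : u y = w y := hunV y hynV
    have hywlt : w y < M/2 := by
      refine hδw y (subset_closure hy.1) ?_
      exact lt_of_lt_of_le (mem_ball.mp hy.2) (min_le_left _ _)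
    have hnorm_le : ‖x₀ - y‖ ≤ R := by
      rw [← dist_eq_norm]
      exact le_trans (hC hx₀cl (subset_closure hy.1)) (le_max_left _ _)
    have hnorm_pos : 0 < ‖x₀ - y‖ := by
      rw [norm_pos_iff, sub_ne_zero]
      intro h
      exact hynV (h ▸ mem_ball_self hr)
    have hkpos : 0 < ‖x₀ - y‖ ^ p := Real.rpow_pos_of_pos hnorm_pos _
    have hkle : ‖x₀ - y‖ ^ p ≤ R ^ p := Real.rpow_le_rpow (norm_nonneg _) hnorm_le hp.le
    rw [hfdef]
    simp only
    rw [hux₀, hyw]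
    exact div_le_div₀ (by linarith) (by linarith) hkpos hkle
  have hlow : c * (volume S).toReal ≤ ∫ y in S, f y :=
    setIntegral_ge_of_const_le_real hSopen.measurableSet hSvolfin.ne hflow
      ((hInt r hr).mono_set hSsub)
  have hS_le : (∫ y in S, f y) ≤ ∫ y in Ω \ ball x₀ r, f y := by
    refine setIntegral_mono_set (hInt r hr) ?_ hSsub.eventuallyLE
    filter_upwards [ae_restrict_mem (hΩmeas.diff measurableSet_ball)] with y hy
    exact hf_nonneg y hy.1
  have hvolpos : 0 < (volume S).toReal := ENNReal.toReal_pos hSvolpos.ne' hSvolfin.ne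
  have : 0 < c * (volume S).toReal := mul_pos hcpos hvolpos
  -- note hL has integrand in terms of patch; f is that integrand
  linarith

/-- Maximum principle: a continuous viscosity solution of
`(-Δ)^α_Ω w = 0` in `Ω` with `w = 0` on `∂Ω` vanishes identically in `Ω`. -/
theorem statement12
    (N : ℕ) (hN : 2 ≤ N) (Ω : Set (EuclideanSpace ℝ (Fin N)))
    (hΩo : IsOpen Ω) (hΩb : Bornology.IsBounded Ω) (hΩconn : IsConnected Ω)
    (hΩbd : HasC2Boundary Ω)
    (α : ℝ) (hα1 : 0 < α) (hα2 : α < 1)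
    (w : EuclideanSpace ℝ (Fin N) → ℝ)
    (hwcont : ContinuousOn w (closure Ω)) (hwint : IntegrableOn w Ω volume)
    (hsuper : ViscSuper Ω α (fun _ => 0) (fun _ => 0) w)
    (hsub : ViscSub Ω α (fun _ => 0) (fun _ => 0) w)
    (hbdry : ∀ z ∈ frontier Ω, w z = 0) :
    ∀ x ∈ Ω, w x = 0 := by
  intro x hx
  have hΩne : Ω.Nonempty := hΩconn.nonempty
  have h1 := aux_nonpos hN hΩo hΩb hΩne hα1 hwcont hwint hsub hbdry x (subset_closure hx)
  have h2 := aux_nonpos hN hΩo hΩb hΩne hα1 hwcont.neg hwint.neg (viscSub_neg hsuper)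
    (fun z hz => by simp [hbdry z hz]) x (subset_closure hx)
  simp only [Pi.neg_apply] at h2
  linarith
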